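/- For every solution of the four-body system, with U₃ = ½((r₂+r₄) − (r₁+r₃)) = (U₃ₓ, U₃_y) and P₃ = ½((p₂+p₄) − (p₁+p₃)) = (P₃ₓ, P₃_y), the normal-mode angular momentum L(t) = U₃ₓ(t)P₃_y(t) − U₃_y(t)P₃ₓ(t) is constant: L(t) = L(0) for all t ∈ ℝ. -/

import Mathlib

noncomputable section

/-- The Euclidean plane. -/
abbrev Plane : Type := EuclideanSpace ℝ (Fin 2)

/-- A solution of the planar four-body system with pairwise quadratic potential
`V = (mω²/4)(2‖r₁−r₂‖² + 2‖r₂−r₃‖² + 2‖r₃−r₄‖² + 2‖r₁−r₄‖² − ‖r₁−r₃‖² − ‖r₂−r₄‖²)`: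
four twice differentiable curves satisfying Newton's equations
`rᵢ'' = −ω²((rᵢ − r_{i+1}) + (rᵢ − r_{i−1}) − ½(rᵢ − r_{i+2}))` (indices mod 4). -/
def IsFourBodySolution (ω : ℝ) (r₁ r₂ r₃ r₄ : ℝ → Plane) : Prop :=
  (Differentiable ℝ r₁ ∧ Differentiable ℝ (deriv r₁)) ∧
  (Differentiable ℝ r₂ ∧ Differentiable ℝ (deriv r₂)) ∧
  (Differentiable ℝ r₃ ∧ Differentiable ℝ (deriv r₃)) ∧
  (Differentiable ℝ r₄ ∧ Differentiable ℝ (deriv r₄)) ∧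
  (∀ t : ℝ, deriv (deriv r₁) t =
    (-(ω ^ 2)) • ((r₁ t - r₂ t) + (r₁ t - r₄ t) - (1 / 2 : ℝ) • (r₁ t - r₃ t))) ∧
  (∀ t : ℝ, deriv (deriv r₂) t =
    (-(ω ^ 2)) • ((r₂ t - r₃ t) + (r₂ t - r₁ t) - (1 / 2 : ℝ) • (r₂ t - r₄ t))) ∧
  (∀ t : ℝ, deriv (deriv r₃) t =
    (-(ω ^ 2)) • ((r₃ t - r₄ t) + (r₃ t - r₂ t) - (1 / 2 : ℝ) • (r₃ t - r₁ t))) ∧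
  (∀ t : ℝ, deriv (deriv r₄) t =
    (-(ω ^ 2)) • ((r₄ t - r₁ t) + (r₄ t - r₃ t) - (1 / 2 : ℝ) • (r₄ t - r₂ t)))

/-- Normal-mode coordinate `U₃ = ½((r₂+r₄) − (r₁+r₃))`. -/
def U3 (r₁ r₂ r₃ r₄ : ℝ → Plane) (t : ℝ) : Plane :=
  (1 / 2 : ℝ) • ((r₂ t + r₄ t) - (r₁ t + r₃ t))

/-- Normal-mode momentum `P₃ = ½((p₂+p₄) − (p₁+p₃))`, where `pᵢ = m rᵢ'`. -/
def P3 (m : ℝ) (r₁ r₂ r₃ r₄ : ℝ → Plane) (t : ℝ) : Plane :=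
  (1 / 2 : ℝ) • ((m • deriv r₂ t + m • deriv r₄ t) - (m • deriv r₁ t + m • deriv r₃ t))

/-- The normal-mode angular momentum
`L = U₃ₓ P₃_y − U₃_y P₃ₓ` is a constant of motion. -/
theorem normal_mode_angular_momentum_conserved (m ω : ℝ) (hm : 0 < m) (hω : 0 < ω)
    (r₁ r₂ r₃ r₄ : ℝ → Plane)
    (hsol : IsFourBodySolution ω r₁ r₂ r₃ r₄) :
    ∀ t : ℝ,
      U3 r₁ r₂ r₃ r₄ t 0 * P3 m r₁ r₂ r₃ r₄ t 1
        - U3 r₁ r₂ r₃ r₄ t 1 * P3 m r₁ r₂ r₃ r₄ t 0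
      = U3 r₁ r₂ r₃ r₄ 0 0 * P3 m r₁ r₂ r₃ r₄ 0 1
        - U3 r₁ r₂ r₃ r₄ 0 1 * P3 m r₁ r₂ r₃ r₄ 0 0 := by
  obtain ⟨⟨h1, h1'⟩, ⟨h2, h2'⟩, ⟨h3, h3'⟩, ⟨h4, h4'⟩, e1, e2, e3, e4⟩ := hsol
  set w : ℝ → Plane := fun t => (r₂ t + r₄ t) - (r₁ t + r₃ t) with hw
  have hdw : Differentiable ℝ w := (h2.add h4).sub (h1.add h3)
  have hderivw : deriv w = fun t =>
      (deriv r₂ t + deriv r₄ t) - (deriv r₁ t + deriv r₃ t) := by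
    funext t
    rw [hw]
    rw [deriv_fun_sub (f := fun y => r₂ y + r₄ y) (g := fun y => r₁ y + r₃ y) ((h2 t).add (h4 t)) ((h1 t).add (h3 t)),
      deriv_fun_add (h2 t) (h4 t), deriv_fun_add (h1 t) (h3 t)]
  have hdw' : Differentiable ℝ (deriv w) := by
    rw [hderivw]; exact (h2'.add h4').sub (h1'.add h3')
  have hw'' : ∀ t, deriv (deriv w) t = (-(4 * ω ^ 2)) • w t := by
    intro t
    rw [hderivw]
    rw [deriv_fun_sub (f := fun y => deriv r₂ y + deriv r₄ y)
      (g := fun y => deriv r₁ y + deriv r₃ y) ((h2' t).add (h4' t)) ((h1' t).add (h3' t)),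
      deriv_fun_add (h2' t) (h4' t), deriv_fun_add (h1' t) (h3' t),
      e1 t, e2 t, e3 t, e4 t, hw]
    module
  have hcomp : ∀ (g : ℝ → Plane), Differentiable ℝ g → ∀ (i : Fin 2) (t : ℝ),
      HasDerivAt (fun s => g s i) (deriv g t i) t := by
    intro g hg i t
    exact (EuclideanSpace.proj i).hasFDerivAt.comp_hasDerivAt t (hg t).hasDerivAt
  have hf : ∀ t : ℝ, HasDerivAt
      (fun s => w s 0 * deriv w s 1 - w s 1 * deriv w s 0) 0 t := by
    intro t
    have hA := hcomp w hdw 0 t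
    have hB := hcomp w hdw 1 t
    have hA' := hcomp (deriv w) hdw' 0 t
    have hB' := hcomp (deriv w) hdw' 1 t
    have h := (hA.mul hB').sub (hB.mul hA')
    refine h.congr_deriv ?_
    have h0 : deriv (deriv w) t 0 = (-(4 * ω ^ 2)) * w t 0 := by
      rw [hw'' t]; rfl
    have h1 : deriv (deriv w) t 1 = (-(4 * ω ^ 2)) * w t 1 := by
      rw [hw'' t]; rfl
    rw [h0, h1]; ring
  have hconst : ∀ s : ℝ, w s 0 * deriv w s 1 - w s 1 * deriv w s 0
      = w 0 0 * deriv w 0 1 - w 0 1 * deriv w 0 0 := by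
    intro s
    exact is_const_of_deriv_eq_zero (fun t => (hf t).differentiableAt)
      (fun t => (hf t).deriv) s 0
  have hP : ∀ t, P3 m r₁ r₂ r₃ r₄ t = (m / 2 : ℝ) • deriv w t := by
    intro t
    rw [hderivw]
    unfold P3
    module
  have hPi : ∀ t (i : Fin 2), P3 m r₁ r₂ r₃ r₄ t i = (m / 2) * deriv w t i := by
    intro t i; rw [hP t]; rfl
  have hUi : ∀ t (i : Fin 2), U3 r₁ r₂ r₃ r₄ t i = (1 / 2) * w t i := fun t i => rfl
  intro t
  rw [hUi, hUi, hUi, hUi, hPi, hPi, hPi, hPi]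
  linear_combination (m / 4) * hconst t
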